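/- arXiv:1405.7158 — 2 statements merged into one kernel-verified Lean document; each statement's English description precedes it below -/
import Mathlib

section
/- Let n ≥ 1 be a natural number and let C₁ ≥ 0, C₂ ≥ 0, η ≥ 0, β > 0 be real numbers with C₁ * C₂ * η * β² < 1. Let a, b, e : ℕ → ℝ be sequences of nonnegative real numbers such that a 1 = 0, b k ≤ C₂ * η * a k for every k with 1 ≤ k ≤ n, a (k+1) ≤ C₁ * (e k + b k) for every k with 1 ≤ k ≤ n − 1, and e k ≤ β^(2(n−k)) * e n for every k with 1 ≤ k ≤ n. Then a n ≤ (C₁ * β² / (1 − C₁ * C₂ * η * β²)) * e n. -/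
theorem multigrid_H1_error_bound
    (n : ℕ) (hn : 1 ≤ n) (C₁ C₂ η β : ℝ)
    (hC₁ : 0 ≤ C₁) (hC₂ : 0 ≤ C₂) (hη : 0 ≤ η) (hβ : 0 < β)
    (hsmall : C₁ * C₂ * η * β ^ 2 < 1)
    (a b e : ℕ → ℝ)
    (ha_nonneg : ∀ k, 0 ≤ a k) (hb_nonneg : ∀ k, 0 ≤ b k)
    (he_nonneg : ∀ k, 0 ≤ e k)
    (ha1 : a 1 = 0)
    (hb : ∀ k, 1 ≤ k → k ≤ n → b k ≤ C₂ * η * a k)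
    (hrec : ∀ k, 1 ≤ k → k ≤ n - 1 → a (k + 1) ≤ C₁ * (e k + b k))
    (he : ∀ k, 1 ≤ k → k ≤ n → e k ≤ β ^ (2 * (n - k)) * e n) :
    a n ≤ (C₁ * β ^ 2 / (1 - C₁ * C₂ * η * β ^ 2)) * e n := by
  set γ : ℝ := C₁ * C₂ * η * β ^ 2 with hγdef
  have hγpos : 0 < 1 - γ := by linarith
  set M : ℝ := C₁ * β ^ 2 / (1 - γ) with hMdef
  have hM0 : 0 ≤ M := by positivity
  have hMeq : C₁ * β ^ 2 + γ * M = M := by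
    rw [hMdef]
    field_simp
    ring
  have key : ∀ k, 1 ≤ k → k ≤ n → a k ≤ M * β ^ (2 * (n - k)) * e n := by
    intro k hk
    induction k, hk using Nat.le_induction with
    | base =>
      intro _
      rw [ha1]
      exact mul_nonneg (mul_nonneg hM0 (by positivity)) (he_nonneg n)
    | succ k hk ih =>
      intro hkn
      have hk_le : k ≤ n := le_trans (Nat.le_succ k) hkn
      have hak := ih hk_le
      have hbk := hb k hk hk_le
      have hek := he k hk hk_le
      have hrk := hrec k hk (by omega)
      have hpow : β ^ (2 * (n - k)) = β ^ 2 * β ^ (2 * (n - (k + 1))) := by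
        rw [← pow_add]
        congr 1
        omega
      have henn := he_nonneg n
      set P : ℝ := β ^ (2 * (n - (k + 1))) with hPdef
      have hP0 : 0 ≤ P := by positivity
      have h1 : a (k + 1) ≤ C₁ * (β ^ 2 * P * e n + C₂ * η * (M * (β ^ 2 * P) * e n)) := by
        calc a (k + 1) ≤ C₁ * (e k + b k) := hrk
          _ ≤ C₁ * (β ^ 2 * P * e n + C₂ * η * (M * (β ^ 2 * P) * e n)) := by
              apply mul_le_mul_of_nonneg_left _ hC₁
              have h2 : b k ≤ C₂ * η * (M * (β ^ 2 * P) * e n) := by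
                refine le_trans hbk ?_
                apply mul_le_mul_of_nonneg_left _ (by positivity)
                rw [hpow] at hak
                linarith
              rw [hpow] at hek
              linarith
      calc a (k + 1) ≤ C₁ * (β ^ 2 * P * e n + C₂ * η * (M * (β ^ 2 * P) * e n)) := h1
        _ = (C₁ * β ^ 2 + γ * M) * P * e n := by rw [hγdef]; ring
        _ = M * P * e n := by rw [hMeq]
  have := key n hn le_rfl
  simpa using this
end

section
/- Let n ≥ 1 be a natural number and let C₁ ≥ 0, C₂ ≥ 0, η ≥ 0, β > 0 be real numbers with C₁ * C₂ * η * β² < 1. Let a, b, e : ℕ → ℝ be sequences of nonnegative real numbers such that a 1 = 0, b k ≤ C₂ * η * a k for every k with 1 ≤ k ≤ n, a (k+1) ≤ C₁ * (e k + b k) for every k with 1 ≤ k ≤ n − 1, and e k ≤ β^(2(n−k)) * e n for every k with 1 ≤ k ≤ n. Then b n ≤ (C₁ * C₂ * η * β² / (1 − C₁ * C₂ * η * β²)) * e n. -/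
theorem multigrid_eigenvalue_L2_error_bound
    (n : ℕ) (hn : 1 ≤ n) (C₁ C₂ η β : ℝ)
    (hC₁ : 0 ≤ C₁) (hC₂ : 0 ≤ C₂) (hη : 0 ≤ η) (hβ : 0 < β)
    (hsmall : C₁ * C₂ * η * β ^ 2 < 1)
    (a b e : ℕ → ℝ)
    (ha_nonneg : ∀ k, 0 ≤ a k) (hb_nonneg : ∀ k, 0 ≤ b k)
    (he_nonneg : ∀ k, 0 ≤ e k)
    (ha1 : a 1 = 0)
    (hb : ∀ k, 1 ≤ k → k ≤ n → b k ≤ C₂ * η * a k)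
    (hrec : ∀ k, 1 ≤ k → k ≤ n - 1 → a (k + 1) ≤ C₁ * (e k + b k))
    (he : ∀ k, 1 ≤ k → k ≤ n → e k ≤ β ^ (2 * (n - k)) * e n) :
    b n ≤ (C₁ * C₂ * η * β ^ 2 / (1 - C₁ * C₂ * η * β ^ 2)) * e n := by
  have hq : 0 < 1 - C₁ * C₂ * η * β ^ 2 := by linarith
  have hen : 0 ≤ e n := he_nonneg n
  have key : ∀ k, 1 ≤ k → k ≤ n →
      a k ≤ C₁ * β ^ (2 * (n - k) + 2) * e n / (1 - C₁ * C₂ * η * β ^ 2) := by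
    intro k hk
    induction k, hk using Nat.le_induction with
    | base =>
      intro _
      rw [ha1]
      exact div_nonneg (by positivity) hq.le
    | succ k hk ih =>
      intro hkn
      have hk1 : k ≤ n := by omega
      have hkn1 : k ≤ n - 1 := by omega
      have h1 := hrec k hk hkn1
      have h2 := he k hk hk1
      have h3 := hb k hk hk1
      have h4 := ih hk1
      have hsub : n - k = (n - (k + 1)) + 1 := by omega
      have hexp : β ^ (2 * (n - k)) = β ^ (2 * (n - (k + 1)) + 2) := by
        rw [hsub]; ring_nf
      set m := n - (k + 1) with hm
      have hpow : (0:ℝ) < β ^ (2 * m + 2) := by positivity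
      have hpow4 : (0:ℝ) < β ^ (2 * m + 4) := by positivity
      -- a (k+1) ≤ C₁ * (e k + b k) ≤ C₁ * (β^(2m+2) e n + C₂ η a k)
      have step : a (k + 1) ≤ C₁ * (β ^ (2 * m + 2) * e n
          + C₂ * η * (C₁ * β ^ (2 * m + 4) * e n / (1 - C₁ * C₂ * η * β ^ 2))) := by
        have hek : e k ≤ β ^ (2 * m + 2) * e n := by rw [← hexp]; exact h2
        have hak : a k ≤ C₁ * β ^ (2 * m + 4) * e n / (1 - C₁ * C₂ * η * β ^ 2) := by
          have : 2 * (n - k) + 2 = 2 * m + 4 := by omega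
          rw [← this]; exact h4
        have hbk : b k ≤ C₂ * η * (C₁ * β ^ (2 * m + 4) * e n / (1 - C₁ * C₂ * η * β ^ 2)) :=
          h3.trans (by apply mul_le_mul_of_nonneg_left hak (by positivity))
        exact h1.trans (mul_le_mul_of_nonneg_left (add_le_add hek hbk) hC₁)
      refine step.trans ?_
      have heq : C₁ * (β ^ (2 * m + 2) * e n
          + C₂ * η * (C₁ * β ^ (2 * m + 4) * e n / (1 - C₁ * C₂ * η * β ^ 2)))
          = C₁ * β ^ (2 * m + 2) * e n / (1 - C₁ * C₂ * η * β ^ 2) := by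
        have h24 : β ^ (2 * m + 4) = β ^ (2 * m + 2) * β ^ 2 := by
          rw [← pow_add]
        rw [h24]
        field_simp
        ring
      rw [heq]
  have han := key n hn le_rfl
  simp only [Nat.sub_self, Nat.mul_zero, Nat.zero_add] at han
  have hbn := hb n hn le_rfl
  have : b n ≤ C₂ * η * (C₁ * β ^ 2 * e n / (1 - C₁ * C₂ * η * β ^ 2)) :=
    hbn.trans (mul_le_mul_of_nonneg_left han (by positivity))
  refine this.trans (le_of_eq ?_)
  field_simp
end
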